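/- Let R_0 = Σ_{k∈K} q_k R_k > 1 and let Θ^* ∈ (0,1) satisfy Σ_{k∈K} q_k R_k/(1+Θ^* R_k) = 1, and set Θ^0 = 1 − 1/R_0. Then the exact identity Θ^0/Θ^* = 1 + cov_q( R_k/(1+Θ^* R_k), R_k/R_0 ) holds, where cov_q(x_k,y_k) = Σ_k q_k x_k y_k − (Σ_k q_k x_k)(Σ_k q_k y_k). -/

import Mathlib

/-- Exact covariance identity:
`Θ⁰/Θ* = 1 + cov_q( R_k/(1+Θ* R_k), R_k/R₀ )`. -/
theorem theta_covariance_identity {K : Type*} [Fintype K] [Nonempty K]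
    (q R : K → ℝ) (hq : ∀ k, 0 ≤ q k) (hqsum : ∑ k, q k = 1) (hR : ∀ k, 0 < R k)
    (R₀ : ℝ) (hR₀ : R₀ = ∑ k, q k * R k) (hR₀gt : 1 < R₀)
    (Θstar : ℝ) (hΘstar : Θstar ∈ Set.Ioo (0:ℝ) 1)
    (hfix : ∑ k, q k * R k / (1 + Θstar * R k) = 1)
    (Θ0 : ℝ) (hΘ0 : Θ0 = 1 - 1 / R₀)
    (cov : (K → ℝ) → (K → ℝ) → ℝ)
    (hcov : ∀ x y : K → ℝ,
      cov x y = (∑ k, q k * (x k * y k)) - (∑ k, q k * x k) * (∑ k, q k * y k)) :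
    Θ0 / Θstar =
      1 + cov (fun k => R k / (1 + Θstar * R k)) (fun k => R k / R₀) := by
  obtain ⟨hΘpos, hΘlt⟩ := hΘstar
  have hΘne : Θstar ≠ 0 := ne_of_gt hΘpos
  have hR₀pos : (0:ℝ) < R₀ := lt_trans one_pos hR₀gt
  have hR₀ne : R₀ ≠ 0 := ne_of_gt hR₀pos
  have hden : ∀ k, (1 + Θstar * R k) ≠ 0 := fun k =>
    ne_of_gt (by nlinarith [hR k, hΘpos, mul_pos hΘpos (hR k)])
  have h1 : ∑ k, q k * (R k / (1 + Θstar * R k)) = 1 := by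
    simpa [mul_div_assoc] using hfix
  have h2 : ∑ k, q k * (R k / R₀) = 1 := by
    have : ∑ k, q k * (R k / R₀) = (∑ k, q k * R k) / R₀ := by
      rw [Finset.sum_div]
      exact Finset.sum_congr rfl fun k _ => by ring
    rw [this, ← hR₀, div_self hR₀ne]
  have hkey : ∀ k, q k * ((R k / (1 + Θstar * R k)) * (R k / R₀))
      = (q k * R k - q k * (R k / (1 + Θstar * R k))) / (Θstar * R₀) := by
    intro k
    have hd := hden k
    have hd' : 1 + R k * Θstar ≠ 0 := by rwa [mul_comm]
    field_simp
    ring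
  have h3 : ∑ k, q k * ((R k / (1 + Θstar * R k)) * (R k / R₀))
      = (R₀ - 1) / (Θstar * R₀) := by
    rw [Finset.sum_congr rfl fun k _ => hkey k, ← Finset.sum_div,
      Finset.sum_sub_distrib, ← hR₀, h1]
  rw [hcov, h1, h2, h3, hΘ0]
  field_simp
  ring
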